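/- Let G = (√5+1)/2. Define Φ(x) = 1/((2+x)²(G+1+x)) + (G+x)/((3+x)²(G+1+x)(G+2+x)) + (G+x)/((4+x)²(G+2+x)(G+3+x)) + (G+x)/((5+x)²(G+3+x)) for x ∈ [0,1]. Then Φ is decreasing on [0,1] and Φ(x) ≤ Φ(0) < 0.1346 for all x ∈ [0,1]. -/
import Mathlib


noncomputable def PhiNICF (x : ℝ) : ℝ :=
  let G : ℝ := (Real.sqrt 5 + 1) / 2
  1 / ((2 + x) ^ 2 * (G + 1 + x))
    + (G + x) / ((3 + x) ^ 2 * (G + 1 + x) * (G + 2 + x))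
    + (G + x) / ((4 + x) ^ 2 * (G + 2 + x) * (G + 3 + x))
    + (G + x) / ((5 + x) ^ 2 * (G + 3 + x))

set_option maxHeartbeats 2000000 in
theorem PhiNICF_decreasing_and_bound :
    AntitoneOn PhiNICF (Set.Icc (0 : ℝ) 1) ∧
    (∀ x ∈ Set.Icc (0 : ℝ) 1, PhiNICF x ≤ PhiNICF 0) ∧
    PhiNICF 0 < 0.1346 := by
  have h5 : Real.sqrt 5 ^ 2 = 5 := Real.sq_sqrt (by norm_num)
  have hs0 : (0:ℝ) ≤ Real.sqrt 5 := Real.sqrt_nonneg 5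
  obtain ⟨g, hg2, hg0, hgl, hgu, hG⟩ :
      ∃ g : ℝ, g ^ 2 = 1 - g ∧ 0 ≤ g ∧ 0.61803 ≤ g ∧ g ≤ 0.61804 ∧
        (Real.sqrt 5 + 1) / 2 = 1 + g :=
    ⟨(Real.sqrt 5 - 1) / 2, by linear_combination h5 / 4, by nlinarith, by nlinarith,
      by nlinarith, by ring⟩
  have hg3 : g ^ 3 = 2 * g - 1 := by linear_combination (g - 1) * hg2
  have anti : AntitoneOn PhiNICF (Set.Icc (0 : ℝ) 1) := by
    intro a ha b hb hab
    obtain ⟨ha0, ha1⟩ := ha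
    obtain ⟨hb0, hb1⟩ := hb
    obtain ⟨t, ht, rfl⟩ : ∃ t, 0 ≤ t ∧ b = a + t := ⟨b - a, by linarith, by ring⟩
    simp only [PhiNICF, hG]
    have h1 : 1 / ((2 + (a + t)) ^ 2 * (1 + g + 1 + (a + t)))
        ≤ 1 / ((2 + a) ^ 2 * (1 + g + 1 + a)) := by
      rw [div_le_div_iff₀ (by positivity) (by positivity)]
      have hkey : 1 * ((2 + (a + t)) ^ 2 * (1 + g + 1 + (a + t)))
          - 1 * ((2 + a) ^ 2 * (1 + g + 1 + a))
          = t * (12 + 4*g + 6*t + t*g + t^2 + 12*a + 2*a*g + 3*a*t + 3*a^2) := by ring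
      have hP : 0 ≤ t * (12 + 4*g + 6*t + t*g + t^2 + 12*a + 2*a*g + 3*a*t + 3*a^2) := by
        positivity
      linarith
    have h2 : (1 + g + (a + t)) / ((3 + (a + t)) ^ 2 * (1 + g + 1 + (a + t)) * (1 + g + 2 + (a + t)))
        ≤ (1 + g + a) / ((3 + a) ^ 2 * (1 + g + 1 + a) * (1 + g + 2 + a)) := by
      rw [div_le_div_iff₀ (by positivity) (by positivity)]
      have hkey : (1 + g + a) * ((3 + (a + t)) ^ 2 * (1 + g + 1 + (a + t)) * (1 + g + 2 + (a + t)))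
          - (1 + g + (a + t)) * ((3 + a) ^ 2 * (1 + g + 1 + a) * (1 + g + 2 + a))
          = t * (66 + 51*g + 62*t + 46*t*g + 13*t^2 + 11*t^2*g + 1*t^3 + 1*t^3*g + 124*a + 92*a*g + 85*a*t + 49*a*t*g + 15*a*t^2 + 6*a*t^2*g + 1*a*t^3 + 85*a^2 + 49*a^2*g + 39*a^2*t + 12*a^2*t*g + 4*a^2*t^2 + 26*a^3 + 8*a^3*g + 6*a^3*t + 3*a^4) := by
        linear_combination (39*t + 6*t*g + 17*t^2 + 1*t^2*g + 2*t^3 + 34*a*t + 2*a*t*g + 7*a*t^2 + 7*a^2*t) * hg2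
      have hP : 0 ≤ t * (66 + 51*g + 62*t + 46*t*g + 13*t^2 + 11*t^2*g + 1*t^3 + 1*t^3*g + 124*a + 92*a*g + 85*a*t + 49*a*t*g + 15*a*t^2 + 6*a*t^2*g + 1*a*t^3 + 85*a^2 + 49*a^2*g + 39*a^2*t + 12*a^2*t*g + 4*a^2*t^2 + 26*a^3 + 8*a^3*g + 6*a^3*t + 3*a^4) := by positivity
      linarith
    have h34 : (1 + g + (a + t)) / ((4 + (a + t)) ^ 2 * (1 + g + 2 + (a + t)) * (1 + g + 3 + (a + t)))
          + (1 + g + (a + t)) / ((5 + (a + t)) ^ 2 * (1 + g + 3 + (a + t)))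
        ≤ (1 + g + a) / ((4 + a) ^ 2 * (1 + g + 2 + a) * (1 + g + 3 + a))
          + (1 + g + a) / ((5 + a) ^ 2 * (1 + g + 3 + a)) := by
      rw [div_add_div _ _ (by positivity) (by positivity),
        div_add_div _ _ (by positivity) (by positivity),
        div_le_div_iff₀ (by positivity) (by positivity)]
      have hkey : ((1 + g + a) * ((5 + a) ^ 2 * (1 + g + 3 + a))
            + (4 + a) ^ 2 * (1 + g + 2 + a) * (1 + g + 3 + a) * (1 + g + a))
            * ((4 + (a + t)) ^ 2 * (1 + g + 2 + (a + t)) * (1 + g + 3 + (a + t))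
              * ((5 + (a + t)) ^ 2 * (1 + g + 3 + (a + t))))
          - ((1 + g + (a + t)) * ((5 + (a + t)) ^ 2 * (1 + g + 3 + (a + t)))
            + (4 + (a + t)) ^ 2 * (1 + g + 2 + (a + t)) * (1 + g + 3 + (a + t)) * (1 + g + (a + t)))
            * ((4 + a) ^ 2 * (1 + g + 2 + a) * (1 + g + 3 + a) * ((5 + a) ^ 2 * (1 + g + 3 + a)))
          = t * (1376800 + 1237400*g + 3477670*t + 2672895*t*g + 2564999*t^2 + 1871333*t^2*g + 877455*t^3 + 622940*t^3*g + 154582*t^4 + 107929*t^4*g + 13365*t^5 + 9295*t^5*g + 429*t^6 + 308*t^6*g + 6955340*a + 5345790*a*g + 11806841*a*t + 8481342*a*t*g + 7107647*a*t^2 + 4897923*a*t^2*g + 2078259*a*t^3 + 1380883*a*t^3*g + 317254*a*t^4 + 202755*a*t^4*g + 23900*a*t^5 + 14645*a*t^5*g + 679*a*t^6 + 402*a*t^6*g + 11806841*a^2 + 8481342*a^2*g + 16058211*a^2*t + 10956129*a^2*t*g + 8179015*a^2*t^2 + 5322763*a^2*t^2*g + 2049029*a^2*t^3 + 1262933*a^2*t^3*g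 + 267176*a^2*t^4 + 153651*a^2*t^4*g + 17007*a^2*t^5 + 8937*a^2*t^5*g + 403*a^2*t^6 + 189*a^2*t^6*g + 10705474*a^3 + 7304086*a^3*g + 12201512*a^3*t + 7883760*a^3*t*g + 5290876*a^3*t^2 + 3210082*a^3*t^2*g + 1124160*a^3*t^3 + 628226*a^3*t^3*g + 122377*a^3*t^4 + 61055*a^3*t^4*g + 6331*a^3*t^5 + 2688*a^3*t^5*g + 117*a^3*t^6 + 39*a^3*t^6*g + 6100756*a^4 + 3941880*a^4*g + 5887285*a^4*t + 3552190*a^4*t*g + 2156100*a^4*t^2 + 1189648*a^4*t^2*g + 380545*a^4*t^3 + 185290*a^4*t^3*g + 33373*a^4*t^4 + 13531*a^4*t^4*g + 1321*a^4*t^5 + 402*a^4*t^5*g + 17*a^4*t^6 + 3*a^4*t^6*g + 2354914*a^5 + 1420876*a^5*g + 1912824*a^5*t + 1050642*a^5*t*g + 580191*a^5*t^2 + 279405*a^5*t^2*g + 82155*a^5*t^3 + 32578*a^5*t^3*g + 5469*a^5*t^4 + 1593*a^5*t^4*g + 148*a^5*t^5 + 24*a^5*t^5*g + 1*a^5*t^6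 + 637608*a^6 + 350214*a^6*g + 427973*a^6*t + 205289*a^6*t*g + 103895*a^6*t^2 + 40782*a^6*t^2*g + 11123*a^6*t^3 + 3171*a^6*t^3*g + 502*a^6*t^4 + 78*a^6*t^4*g + 7*a^6*t^5 + 122278*a^7 + 58654*a^7*g + 65580*a^7*t + 25648*a^7*t*g + 12010*a^7*t^2 + 3390*a^7*t^2*g + 868*a^7*t^3 + 132*a^7*t^3*g + 20*a^7*t^4 + 16395*a^8 + 6412*a^8*g + 6624*a^8*t + 1863*a^8*t*g + 817*a^8*t^2 + 123*a^8*t^2*g + 30*a^8*t^3 + 1472*a^9 + 414*a^9*g + 400*a^9*t + 60*a^9*t*g + 25*a^9*t^2 + 80*a^10 + 12*a^10*g + 11*a^10*t + 2*a^11) := by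
        linear_combination (2507040*t + 1486520*t*g + 398600*t*g^2 + 51080*t*g^3 + 2560*t*g^4 + 3415334*t^2 + 1615077*t^2*g + 358535*t^2*g^2 + 37953*t^2*g^3 + 1536*t^2*g^4 + 1815111*t^3 + 696484*t^3*g + 124993*t^3*g^2 + 10242*t^3*g^3 + 288*t^3*g^4 + 485827*t^4 + 150148*t^4*g + 20797*t^4*g^2 + 1177*t^4*g^3 + 16*t^4*g^4 + 68954*t^5 + 16680*t^5*g + 1627*t^5*g^2 + 48*t^5*g^3 + 4897*t^6 + 875*t^6*g + 48*t^6*g^2 + 137*t^7 + 16*t^7*g + 6830668*a*t + 3230154*a*t*g + 717070*a*t*g^2 + 75906*a*t*g^3 + 3072*a*t*g^4 + 8000537*a*t^2 + 3052535*a*t^2*g + 553795*a*t^2*g^2 + 47128*a*t^2*g^3 + 1472*a*t^2*g^4 + 3648895*a*t^3 + 1121360*a*t^3*g + 160554*a*t^3*g^2 + 10168*a*t^3*g^3 + 208*a*t^3*g^4 + 826544*a*t^4 + 200045*a*t^4*g + 21259*a*t^4*g^2 + 874*a*t^4*g^3 + 8*a*t^4*g^4 + 96891*a*t^5 + 17632*a*t^5*g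 + 1238*a*t^5*g^2 + 24*a*t^5*g^3 + 5471*a*t^6 + 686*a*t^6*g + 24*a*t^6*g^2 + 114*a*t^7 + 8*a*t^7*g + 8000537*a^2*t + 3052535*a^2*t*g + 553795*a^2*t*g^2 + 47128*a^2*t*g^3 + 1472*a^2*t*g^4 + 8031723*a^2*t^2 + 2463192*a^2*t^2*g + 356880*a^2*t^2*g^2 + 23442*a^2*t^2*g^3 + 528*a^2*t^2*g^4 + 3100003*a^2*t^3 + 750762*a^2*t^3*g + 82630*a^2*t^3*g^2 + 3790*a^2*t^3*g^3 + 50*a^2*t^3*g^4 + 580281*a^2*t^4 + 106634*a^2*t^4*g + 8175*a^2*t^4*g^2 + 217*a^2*t^4*g^3 + 1*a^2*t^4*g^4 + 54153*a^2*t^5 + 7017*a^2*t^5*g + 316*a^2*t^5*g^2 + 3*a^2*t^5*g^3 + 2293*a^2*t^6 + 181*a^2*t^6*g + 3*a^2*t^6*g^2 + 32*a^2*t^7 + 1*a^2*t^7*g + 5354482*a^3*t + 1642128*a^3*t*g + 237920*a^3*t*g^2 + 15628*a^3*t*g^3 + 352*a^3*t*g^4 + 4546918*a^3*t^2 + 1101434*a^3*t^2*g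 + 122742*a^3*t^2*g^2 + 5832*a^3*t^2*g^3 + 84*a^3*t^2*g^4 + 1450154*a^3*t^3 + 267716*a^3*t^3*g + 21280*a^3*t^3*g^2 + 628*a^3*t^3*g^3 + 4*a^3*t^3*g^4 + 216022*a^3*t^4 + 28430*a^3*t^4*g + 1400*a^3*t^4*g^2 + 18*a^3*t^4*g^3 + 15096*a^3*t^5 + 1245*a^3*t^5*g + 27*a^3*t^5*g^2 + 428*a^3*t^6 + 16*a^3*t^6*g + 3*a^3*t^7 + 2273459*a^4*t + 550717*a^4*t*g + 61371*a^4*t*g^2 + 2916*a^4*t*g^3 + 42*a^4*t*g^4 + 1594950*a^4*t^2 + 294940*a^4*t^2*g + 23745*a^4*t^2*g^2 + 725*a^4*t^2*g^3 + 5*a^4*t^2*g^4 + 404656*a^4*t^3 + 53635*a^4*t^3*g + 2740*a^4*t^3*g^2 + 39*a^4*t^3*g^3 + 45075*a^4*t^4 + 3790*a^4*t^4*g + 90*a^4*t^4*g^2 + 2102*a^4*t^5 + 83*a^4*t^5*g + 30*a^4*t^6 + 637980*a^5*t + 117976*a^5*t*g + 9498*a^5*t*g^2 + 290*a^5*t*g^3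 + 2*a^5*t*g^4 + 355974*a^5*t^2 + 47304*a^5*t^2*g + 2448*a^5*t^2*g^2 + 36*a^5*t^2*g^3 + 67478*a^5*t^3 + 5723*a^5*t^3*g + 141*a^5*t^3*g^2 + 5004*a^5*t^4 + 202*a^5*t^4*g + 117*a^5*t^5 + 118658*a^6*t + 15768*a^6*t*g + 816*a^6*t*g^2 + 12*a^6*t*g^3 + 49448*a^6*t^2 + 4207*a^6*t^2*g + 105*a^6*t^2*g^2 + 6232*a^6*t^3 + 254*a^6*t^3*g + 231*a^6*t^4 + 14128*a^7*t + 1202*a^7*t*g + 30*a^7*t*g^2 + 3912*a^7*t^2 + 160*a^7*t^2*g + 246*a^7*t^3 + 978*a^8*t + 40*a^8*t*g + 135*a^8*t^2 + 30*a^9*t) * hg2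
      have hP : 0 ≤ t * (1376800 + 1237400*g + 3477670*t + 2672895*t*g + 2564999*t^2 + 1871333*t^2*g + 877455*t^3 + 622940*t^3*g + 154582*t^4 + 107929*t^4*g + 13365*t^5 + 9295*t^5*g + 429*t^6 + 308*t^6*g + 6955340*a + 5345790*a*g + 11806841*a*t + 8481342*a*t*g + 7107647*a*t^2 + 4897923*a*t^2*g + 2078259*a*t^3 + 1380883*a*t^3*g + 317254*a*t^4 + 202755*a*t^4*g + 23900*a*t^5 + 14645*a*t^5*g + 679*a*t^6 + 402*a*t^6*g + 11806841*a^2 + 8481342*a^2*g + 16058211*a^2*t + 10956129*a^2*t*g + 8179015*a^2*t^2 + 5322763*a^2*t^2*g + 2049029*a^2*t^3 + 1262933*a^2*t^3*g + 267176*a^2*t^4 + 153651*a^2*t^4*g + 17007*a^2*t^5 + 8937*a^2*t^5*g + 403*a^2*t^6 + 189*a^2*t^6*g + 10705474*a^3 + 7304086*a^3*g + 12201512*a^3*t + 7883760*a^3*t*g + 5290876*a^3*t^2 + 3210082*a^3*t^2*g + 1124160*a^3*t^3 + 628226*a^3*t^3*g + 122377*a^3*t^4 + 61055*a^3*t^4*g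 + 6331*a^3*t^5 + 2688*a^3*t^5*g + 117*a^3*t^6 + 39*a^3*t^6*g + 6100756*a^4 + 3941880*a^4*g + 5887285*a^4*t + 3552190*a^4*t*g + 2156100*a^4*t^2 + 1189648*a^4*t^2*g + 380545*a^4*t^3 + 185290*a^4*t^3*g + 33373*a^4*t^4 + 13531*a^4*t^4*g + 1321*a^4*t^5 + 402*a^4*t^5*g + 17*a^4*t^6 + 3*a^4*t^6*g + 2354914*a^5 + 1420876*a^5*g + 1912824*a^5*t + 1050642*a^5*t*g + 580191*a^5*t^2 + 279405*a^5*t^2*g + 82155*a^5*t^3 + 32578*a^5*t^3*g + 5469*a^5*t^4 + 1593*a^5*t^4*g + 148*a^5*t^5 + 24*a^5*t^5*g + 1*a^5*t^6 + 637608*a^6 + 350214*a^6*g + 427973*a^6*t + 205289*a^6*t*g + 103895*a^6*t^2 + 40782*a^6*t^2*g + 11123*a^6*t^3 + 3171*a^6*t^3*g + 502*a^6*t^4 + 78*a^6*t^4*g + 7*a^6*t^5 + 122278*a^7 + 58654*a^7*g + 65580*a^7*t + 25648*a^7*t*g + 12010*a^7*t^2 + 3390*a^7*t^2*g + 868*a^7*t^3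 + 132*a^7*t^3*g + 20*a^7*t^4 + 16395*a^8 + 6412*a^8*g + 6624*a^8*t + 1863*a^8*t*g + 817*a^8*t^2 + 123*a^8*t^2*g + 30*a^8*t^3 + 1472*a^9 + 414*a^9*g + 400*a^9*t + 60*a^9*t*g + 25*a^9*t^2 + 80*a^10 + 12*a^10*g + 11*a^10*t + 2*a^11) := by positivity
      linarith
    linarith
  refine ⟨anti, fun x hx => anti (Set.left_mem_Icc.2 zero_le_one) hx hx.1, ?_⟩
  have e1 : PhiNICF 0 = 1/(4*(2+g)) + (1+g)/(9*(2+g)*(3+g)) + (1+g)/(16*(3+g)*(4+g))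
      + (1+g)/(25*(4+g)) := by
    have p2 : (0:ℝ) < 2 + g := by linarith
    have p3 : (0:ℝ) < 3 + g := by linarith
    have p4 : (0:ℝ) < 4 + g := by linarith
    simp only [PhiNICF, hG]
    rw [div_add_div _ _ (by positivity) (by positivity),
      div_add_div _ _ (by positivity) (by positivity),
      div_add_div _ _ (by positivity) (by positivity),
      div_add_div _ _ (by positivity) (by positivity),
      div_add_div _ _ (by positivity) (by positivity),
      div_add_div _ _ (by positivity) (by positivity),
      div_eq_div_iff (by positivity) (by positivity)]
    ring
  rw [e1]
  have p2 : (0:ℝ) < 2 + g := by linarith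
  have p3 : (0:ℝ) < 3 + g := by linarith
  have p4 : (0:ℝ) < 4 + g := by linarith
  have key : (0.1346:ℝ) - (1/(4*(2+g)) + (1+g)/(9*(2+g)*(3+g)) + (1+g)/(16*(3+g)*(4+g))
      + (1+g)/(25*(4+g)))
      = (-52114 + 50989*g + 49301*g^2 + 8514*g^3) / (90000*((2+g)*(3+g)*(4+g))) := by
    rw [eq_div_iff (by positivity)]
    field_simp
    ring
  have hnum : (0:ℝ) < -52114 + 50989*g + 49301*g^2 + 8514*g^3 := by nlinarith [hg2, hg3]
  have : (0:ℝ) < (-52114 + 50989*g + 49301*g^2 + 8514*g^3) / (90000*((2+g)*(3+g)*(4+g))) :=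
    div_pos hnum (by positivity)
  linarith
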